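/- If r is a positive integer divisible by 3 (and r ≥ 3), then every r-regular graph admits a zero-sum 5-flow. -/

import Mathlib

open Finset SimpleGraph

/-- Hall step: a ℕ-matrix with all row and column sums equal to `k ≥ 1` dominates
a permutation matrix. -/
lemma exists_perm_of_regular {V : Type*} [Fintype V] [DecidableEq V]
    (B : V → V → ℕ) (k : ℕ) (hk : 1 ≤ k)
    (hrow : ∀ v, ∑ u, B v u = k) (hcol : ∀ v, ∑ u, B u v = k) :
    ∃ σ : V → V, Function.Bijective σ ∧ ∀ v, 1 ≤ B v (σ v) := by
  set t : V → Finset V := fun v => univ.filter (fun u => 1 ≤ B v u) with ht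
  have hall : ∀ s : Finset V, s.card ≤ (s.biUnion t).card := by
    intro s
    have key : k * s.card ≤ k * (s.biUnion t).card := by
      calc k * s.card = ∑ v ∈ s, ∑ u, B v u := by
            rw [Finset.sum_congr rfl (fun v _ => hrow v), Finset.sum_const, smul_eq_mul, mul_comm]
        _ = ∑ u, ∑ v ∈ s, B v u := Finset.sum_comm
        _ = ∑ u ∈ s.biUnion t, ∑ v ∈ s, B v u := by
            refine (Finset.sum_subset (Finset.subset_univ _) ?_).symm
            intro u _ hu
            refine Finset.sum_eq_zero (fun v hv => ?_)
            by_contra h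
            exact hu (Finset.mem_biUnion.2 ⟨v, hv, Finset.mem_filter.2
              ⟨Finset.mem_univ _, Nat.one_le_iff_ne_zero.2 h⟩⟩)
        _ ≤ ∑ u ∈ s.biUnion t, ∑ v, B v u :=
            Finset.sum_le_sum (fun u _ => Finset.sum_le_sum_of_subset (Finset.subset_univ _))
        _ = ∑ u ∈ s.biUnion t, k := Finset.sum_congr rfl (fun u _ => hcol u)
        _ = k * (s.biUnion t).card := by rw [Finset.sum_const, smul_eq_mul, mul_comm]
    exact Nat.le_of_mul_le_mul_left key hk
  obtain ⟨σ, hinj, hmem⟩ := (Finset.all_card_le_biUnion_card_iff_exists_injective t).1 hall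
  refine ⟨σ, Finite.injective_iff_bijective.1 hinj, fun v => ?_⟩
  have := hmem v
  rw [ht, Finset.mem_filter] at this
  exact this.2

/-- From a ℕ-matrix with row and column sums `k` one can extract a submatrix
with row and column sums `s`, for any `s ≤ k`. -/
lemma exists_submatrix_sums {V : Type*} [Fintype V] [DecidableEq V] :
    ∀ (s k : ℕ), s ≤ k → ∀ (B : V → V → ℕ),
    (∀ v, ∑ u, B v u = k) → (∀ v, ∑ u, B u v = k) →
    ∃ y : V → V → ℕ, (∀ u v, y u v ≤ B u v) ∧
      (∀ v, ∑ u, y v u = s) ∧ (∀ v, ∑ u, y u v = s) := by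
  intro s
  induction s with
  | zero =>
    intro k _ B _ _
    exact ⟨fun _ _ => 0, fun _ _ => Nat.zero_le _, fun v => by simp, fun v => by simp⟩
  | succ n ih =>
    intro k hk B hrow hcol
    have hk1 : 1 ≤ k := le_trans (Nat.succ_le_succ (Nat.zero_le n)) hk
    obtain ⟨σ, hσ, hσB⟩ := exists_perm_of_regular B k hk1 hrow hcol
    -- subtract the permutation matrix
    set P : V → V → ℕ := fun v u => if σ v = u then 1 else 0 with hP
    set B' : V → V → ℕ := fun v u => B v u - P v u with hB'
    have hPle : ∀ v u, P v u ≤ B v u := by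
      intro v u
      by_cases h : σ v = u
      · simpa [hP, h] using h ▸ hσB v
      · simp [hP, h]
    have hProw : ∀ v, ∑ u, P v u = 1 := by
      intro v
      simp [hP]
    have hPcol : ∀ v, ∑ u, P u v = 1 := by
      intro v
      have h1 : ∑ u, P u v = ∑ w, (if w = v then 1 else 0) :=
        Fintype.sum_bijective σ hσ _ _ (fun u => rfl)
      rw [h1]
      simp
    have hrow' : ∀ v, ∑ u, B' v u = k - 1 := by
      intro v
      have h1 : ∑ u, B' v u = ∑ u, B v u - ∑ u, P v u :=
        Finset.sum_tsub_distrib univ (fun u _ => hPle v u)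
      rw [h1, hrow v, hProw v]
    have hcol' : ∀ v, ∑ u, B' u v = k - 1 := by
      intro v
      have h1 : ∑ u, B' u v = ∑ u, B u v - ∑ u, P u v :=
        Finset.sum_tsub_distrib univ (fun u _ => hPle u v)
      rw [h1, hcol v, hPcol v]
    obtain ⟨y', hy'le, hy'row, hy'col⟩ :=
      ih (k - 1) (by omega) B' hrow' hcol'
    refine ⟨fun u v => y' u v + P u v, ?_, ?_, ?_⟩
    · intro u v
      have h1 := hy'le u v
      have h2 := hPle u v
      simp only [hB'] at h1
      show y' u v + P u v ≤ B u v
      omega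
    · intro v
      rw [Finset.sum_add_distrib, hy'row v, hProw v]
    · intro v
      rw [Finset.sum_add_distrib, hy'col v, hPcol v]

/-- If `r ≥ 3` is divisible by 3, then every `r`-regular graph admits a zero-sum 5-flow. -/
theorem stmt_6 {V : Type*} [Fintype V] [DecidableEq V] (G : SimpleGraph V)
    [DecidableRel G.Adj] (r : ℕ) (hdvd : 3 ∣ r) (hr : 3 ≤ r)
    (hreg : G.IsRegularOfDegree r) :
    ∃ f : Sym2 V → ℤ,
      (∀ e ∈ G.edgeFinset, f e ≠ 0 ∧ (f e).natAbs ≤ 4) ∧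
      (∀ v : V, ∑ e ∈ G.incidenceFinset v, f e = 0) := by
  obtain ⟨s, rfl⟩ := hdvd
  set A : V → V → ℕ := fun v u => if G.Adj v u then 1 else 0 with hA
  have hrowA : ∀ v, ∑ u, A v u = 3 * s := by
    intro v
    rw [hA]
    simp only [Finset.sum_boole, Nat.cast_id]
    rw [← SimpleGraph.neighborFinset_eq_filter, SimpleGraph.card_neighborFinset_eq_degree]
    exact hreg v
  have hcolA : ∀ v, ∑ u, A u v = 3 * s := by
    intro v
    have : ∀ u, A u v = A v u := by
      intro u
      simp only [hA]
      by_cases h : G.Adj v u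
      · simp [h, h.symm]
      · simp only [if_neg h, if_neg (fun (h' : G.Adj u v) => h h'.symm)]
    rw [Finset.sum_congr rfl (fun u _ => this u)]
    exact hrowA v
  obtain ⟨y, hyle, hyrow, hycol⟩ :=
    exists_submatrix_sums s (3 * s) (by omega) A hrowA hcolA
  have hy0 : ∀ u w, ¬ G.Adj u w → y u w = 0 := by
    intro u w h
    have := hyle u w
    simp only [hA, if_neg h] at this
    omega
  have hy1 : ∀ u w, y u w ≤ 1 := by
    intro u w
    have := hyle u w
    simp only [hA] at this
    split at this <;> omega
  refine ⟨Sym2.lift ⟨fun u w => 2 - 3 * ((y u w : ℤ) + y w u), by intro u w; ring⟩, ?_, ?_⟩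
  · intro e he
    induction e using Sym2.ind with
    | _ u w =>
      rw [Sym2.lift_mk]
      dsimp only
      have hadj : G.Adj u w := (SimpleGraph.mem_edgeFinset.1 he)
      have h1 := hy1 u w
      have h2 := hy1 w u
      constructor
      · omega
      · omega
  · intro v
    have himg : G.incidenceFinset v = (G.neighborFinset v).image (fun u => s(v, u)) := by
      ext e
      induction e using Sym2.ind with
      | _ a b =>
        simp only [SimpleGraph.mem_incidenceFinset, SimpleGraph.mk'_mem_incidenceSet_iff,
          Finset.mem_image, SimpleGraph.mem_neighborFinset]
        constructor
        · rintro ⟨hadj, (rfl | rfl)⟩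
          · exact ⟨b, hadj, rfl⟩
          · exact ⟨a, hadj.symm, Sym2.eq_swap⟩
        · rintro ⟨u, hu, hs⟩
          rw [Sym2.eq_iff] at hs
          rcases hs with ⟨rfl, rfl⟩ | ⟨rfl, rfl⟩
          · exact ⟨hu, Or.inl rfl⟩
          · exact ⟨hu.symm, Or.inr rfl⟩
    have hinj : ∀ x ∈ G.neighborFinset v, ∀ y ∈ G.neighborFinset v,
        s(v, x) = s(v, y) → x = y := fun x _ y _ h => Sym2.congr_right.1 h
    rw [himg, Finset.sum_image hinj]
    simp only [Sym2.lift_mk]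
    have hsub : G.neighborFinset v ⊆ univ := Finset.subset_univ _
    have hrowext : ∑ u ∈ G.neighborFinset v, (y v u : ℤ) = (s : ℤ) := by
      have : ∑ u ∈ G.neighborFinset v, y v u = ∑ u, y v u := by
        refine Finset.sum_subset hsub ?_
        intro u _ hu
        exact hy0 v u (fun h => hu ((SimpleGraph.mem_neighborFinset G v u).2 h))
      rw [← Nat.cast_sum, this, hyrow v]
    have hcolext : ∑ u ∈ G.neighborFinset v, (y u v : ℤ) = (s : ℤ) := by
      have : ∑ u ∈ G.neighborFinset v, y u v = ∑ u, y u v := by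
        refine Finset.sum_subset hsub ?_
        intro u _ hu
        exact hy0 u v (fun h => hu ((SimpleGraph.mem_neighborFinset G v u).2 h.symm))
      rw [← Nat.cast_sum, this, hycol v]
    have hcard : (G.neighborFinset v).card = 3 * s := by
      rw [SimpleGraph.card_neighborFinset_eq_degree]
      exact hreg v
    rw [Finset.sum_sub_distrib, Finset.sum_const, hcard, ← Finset.mul_sum,
      Finset.sum_add_distrib, hrowext, hcolext]
    ring
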